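/- Let E' and E be elliptic curves over an algebraically closed field of characteristic 0 such that End(E') ⊗ Q and End(E) ⊗ Q are both isomorphic to an imaginary quadratic field K of discriminant D, and E', E are isogenous. Equip Hom(E', E) with the quadratic form f ↦ deg f. Then there exist non-zero integers m and n such that m² · disc(Hom(E', E)) = −n² · D. -/

import Mathlib

/-- An abstract theory of (elliptic curves and) isogenies over an algebraically closed
field: a category of curves with abelian-group `Hom`-sets, equipped with a degree
function satisfying the standard axioms (degree is multiplicative, positive on non-zero
homomorphisms, the associated form is bilinear, and dual isogenies exist). -/
structure IsogenyTheory (Curve : Type) (Hom : Curve → Curve → Type)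
    [∀ E F : Curve, AddCommGroup (Hom E F)] : Type where
  comp : {E F G : Curve} → Hom F G → Hom E F → Hom E G
  one : (E : Curve) → Hom E E
  comp_assoc : ∀ {E F G H : Curve} (f : Hom G H) (g : Hom F G) (h : Hom E F),
    comp (comp f g) h = comp f (comp g h)
  one_comp : ∀ {E F : Curve} (f : Hom E F), comp (one F) f = f
  comp_one : ∀ {E F : Curve} (f : Hom E F), comp f (one E) = f
  comp_add : ∀ {E F G : Curve} (f : Hom F G) (g h : Hom E F),
    comp f (g + h) = comp f g + comp f h
  add_comp : ∀ {E F G : Curve} (f g : Hom F G) (h : Hom E F),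
    comp (f + g) h = comp f h + comp g h
  deg : {E F : Curve} → Hom E F → ℤ
  deg_zero : ∀ {E F : Curve}, deg (0 : Hom E F) = 0
  deg_pos : ∀ {E F : Curve} (f : Hom E F), f ≠ 0 → 0 < deg f
  deg_one : ∀ E : Curve, deg (one E) = 1
  deg_comp : ∀ {E F G : Curve} (f : Hom F G) (g : Hom E F),
    deg (comp f g) = deg f * deg g
  deg_quadratic : ∀ {E F : Curve} (f g h : Hom E F),
    deg (f + g + h) - deg (f + g) - deg h
      = (deg (f + h) - deg f - deg h) + (deg (g + h) - deg g - deg h)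
  exists_dual : ∀ {E F : Curve} (f : Hom E F), f ≠ 0 →
    ∃ g : Hom F E, comp g f = deg f • one E ∧ comp f g = deg f • one F

namespace IsogenyTheory

variable {Curve : Type} {Hom : Curve → Curve → Type}
    [∀ E F : Curve, AddCommGroup (Hom E F)] (T : IsogenyTheory Curve Hom)

/-- The polarization bilinear form of the degree form. -/
def B {E F : Curve} (g h : Hom E F) : ℤ := T.deg (g + h) - T.deg g - T.deg h

variable {E F G : Curve}

lemma B_comm (g h : Hom E F) : T.B g h = T.B h g := by
  unfold B; rw [add_comm]; ring

lemma B_add_left (f g h : Hom E F) : T.B (f + g) h = T.B f h + T.B g h := by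
  have := T.deg_quadratic f g h
  simp only [B]; omega

lemma B_add_right (f g h : Hom E F) : T.B f (g + h) = T.B f g + T.B f h := by
  rw [B_comm, B_add_left, B_comm T g, B_comm T h]

/-- `B` as an additive hom in the left argument. -/
private def Bhom (h : Hom E F) : Hom E F →+ ℤ :=
  AddMonoidHom.mk' (fun g => T.B g h) (fun f g => T.B_add_left f g h)

lemma B_zsmul_left (n : ℤ) (f h : Hom E F) : T.B (n • f) h = n * T.B f h := by
  exact ((T.Bhom h).map_zsmul n f).trans (smul_eq_mul ..)

lemma B_zsmul_right (n : ℤ) (f h : Hom E F) : T.B f (n • h) = n * T.B f h := by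
  rw [B_comm, B_zsmul_left, B_comm]

/-- composition as an additive hom in the right argument. -/
private def compHom (f : Hom F G) : Hom E F →+ Hom E G :=
  AddMonoidHom.mk' (fun g => T.comp f g) (fun g h => T.comp_add f g h)

/-- composition as an additive hom in the left argument. -/
private def compHom' (f : Hom E F) : Hom F G →+ Hom E G :=
  AddMonoidHom.mk' (fun g => T.comp g f) (fun g h => T.add_comp g h f)

lemma comp_zsmul (f : Hom F G) (n : ℤ) (g : Hom E F) :
    T.comp f (n • g) = n • T.comp f g := by
  exact (T.compHom f).map_zsmul n g

lemma zsmul_comp (n : ℤ) (f : Hom F G) (g : Hom E F) :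
    T.comp (n • f) g = n • T.comp f g := by
  exact (T.compHom' g).map_zsmul n f

lemma one_ne_zero (E : Curve) : T.one E ≠ (0 : Hom E E) := by
  intro h
  have := T.deg_one E
  rw [h, T.deg_zero] at this
  omega

lemma deg_neg_one (E : Curve) : T.deg (-(T.one E)) = 1 := by
  have hco : T.comp (-(T.one E)) (-(T.one E)) = T.one E := by
    have h1 : -(T.one E) = (-1 : ℤ) • T.one E := by simp
    rw [h1, T.comp_zsmul, T.zsmul_comp, T.one_comp]
    simp
  have h2 := T.deg_comp (-(T.one E)) (-(T.one E))
  rw [hco, T.deg_one] at h2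
  have hne : -(T.one E) ≠ 0 := by
    intro h; apply T.one_ne_zero E; simpa using (neg_eq_zero.mp h)
  have := T.deg_pos _ hne
  nlinarith
lemma B_one_one (E : Curve) : T.B (T.one E) (T.one E) = 2 := by
  have h : T.B (-(T.one E)) (T.one E) = - T.B (T.one E) (T.one E) := by
    have : -(T.one E) = (-1 : ℤ) • T.one E := by simp
    rw [this, T.B_zsmul_left]; ring
  have hB : T.B (-(T.one E)) (T.one E) = 0 - T.deg (-(T.one E)) - T.deg (T.one E) := by
    simp [B, T.deg_zero]
  rw [T.deg_neg_one, T.deg_one] at hB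
  omega

lemma deg_zsmul_one (n : ℤ) (E : Curve) : T.deg (n • T.one E) = n ^ 2 := by
  induction n using Int.induction_on with
  | zero => simpa using T.deg_zero
  | succ k ih =>
      have hadd : ((k : ℤ) + 1) • T.one E = (k : ℤ) • T.one E + T.one E := by
        rw [add_smul, one_smul]
      have hB : T.B ((k:ℤ) • T.one E) (T.one E) = (k:ℤ) * 2 := by
        rw [T.B_zsmul_left, T.B_one_one]
      have hd : T.deg ((k:ℤ) • T.one E + T.one E)
          = T.deg ((k:ℤ) • T.one E) + T.deg (T.one E) + T.B ((k:ℤ) • T.one E) (T.one E) := by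
        simp only [B]; ring
      rw [hadd, hd, ih, T.deg_one, hB]; ring
  | pred k ih =>
      have hadd : (-(k : ℤ) - 1) • T.one E = (-(k : ℤ)) • T.one E + (-1 : ℤ) • T.one E := by
        rw [← add_smul]; ring_nf
      have hB : T.B ((-(k:ℤ)) • T.one E) ((-1 : ℤ) • T.one E) = (-(k:ℤ)) * (-1) * 2 := by
        rw [T.B_zsmul_left, T.B_zsmul_right, T.B_one_one]; ring
      have hd : T.deg ((-(k:ℤ)) • T.one E + (-1:ℤ) • T.one E)
          = T.deg ((-(k:ℤ)) • T.one E) + T.deg ((-1:ℤ) • T.one E)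
            + T.B ((-(k:ℤ)) • T.one E) ((-1:ℤ) • T.one E) := by
        simp only [B]; ring
      have hneg1 : T.deg ((-1:ℤ) • T.one E) = 1 := by
        simpa using T.deg_neg_one E
      rw [hadd, hd, ih, hneg1, hB]; ring

lemma deg_zsmul (n : ℤ) (f : Hom E F) : T.deg (n • f) = n ^ 2 * T.deg f := by
  have h1 : T.comp (n • T.one F) f = n • f := by
    rw [T.zsmul_comp, T.one_comp]
  calc T.deg (n • f) = T.deg (T.comp (n • T.one F) f) := by rw [h1]
    _ = T.deg (n • T.one F) * T.deg f := T.deg_comp _ _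
    _ = n ^ 2 * T.deg f := by rw [T.deg_zsmul_one]

lemma deg_add (g h : Hom E F) : T.deg (g + h) = T.deg g + T.deg h + T.B g h := by
  simp only [B]; ring

lemma B_self (f : Hom E F) : T.B f f = 2 * T.deg f := by
  have h : f + f = (2 : ℤ) • f := (two_zsmul f).symm
  have := T.deg_zsmul 2 f
  simp only [B, h, this]; ring

/-- degree of an integral combination `p • 1 + q • e`. -/
lemma deg_comb (p q : ℤ) (e : Hom E E) :
    T.deg (p • T.one E + q • e) = p ^ 2 + p * q * T.B (T.one E) e + q ^ 2 * T.deg e := by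
  rw [T.deg_add, T.deg_zsmul, T.deg_zsmul, T.B_zsmul_left, T.B_zsmul_right, T.deg_one]
  ring

end IsogenyTheory

/-- `End(E) ⊗ ℚ ≅ K`: the endomorphism ring of `E` embeds as a ring into `K` with
`ℚ`-spanning image. -/
def EmbedsAsField {Curve : Type} {Hom : Curve → Curve → Type}
    [∀ E F : Curve, AddCommGroup (Hom E F)]
    (T : IsogenyTheory Curve Hom) (E : Curve) (K : IntermediateField ℚ ℂ) : Prop :=
  ∃ φ : Hom E E → ↥K, Function.Injective φ ∧
    (∀ f g : Hom E E, φ (f + g) = φ f + φ g) ∧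
    (∀ f g : Hom E E, φ (T.comp f g) = φ f * φ g) ∧
    φ (T.one E) = 1 ∧
    Submodule.span ℚ (Set.range φ) = ⊤

open NumberField

set_option maxHeartbeats 1600000

/-- Let `E'`, `E` be isogenous elliptic curves in characteristic `0`
whose endomorphism algebras are both isomorphic to an imaginary quadratic field `K` of
discriminant `D`.  Equip `Hom(E', E)` with the degree form.  Then there are non-zero
integers `m` and `n` with `m² · disc Hom(E', E) = − n² · D`. -/
theorem disc_hom_lattice_eq_disc_field_up_to_squares
    (Curve : Type) (Hom : Curve → Curve → Type)
    [∀ E F : Curve, AddCommGroup (Hom E F)]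
    (T : IsogenyTheory Curve Hom)
    (E' E : Curve)
    (K : IntermediateField ℚ ℂ) [NumberField ↥K]
    (hquad : Module.finrank ℚ ↥K = 2)
    (him : ∃ z : ↥K, (z : ℂ).im ≠ 0)
    (hE' : EmbedsAsField T E' K) (hE : EmbedsAsField T E K)
    (hisog : ∃ f : Hom E' E, f ≠ 0)
    (bas : Module.Basis (Fin 2) ℤ (Hom E' E)) :
    ∃ m n : ℤ, m ≠ 0 ∧ n ≠ 0 ∧
      m ^ 2 * (Matrix.of fun i j =>
          T.deg (bas i + bas j) - T.deg (bas i) - T.deg (bas j)).det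
        = -(n ^ 2) * NumberField.discr ↥K := by
  classical
  obtain ⟨φ, hinj, hadd, hmul, hone, hspan⟩ := hE'
  set Φ : Hom E' E' →+ ↥K := AddMonoidHom.mk' φ hadd with hΦdef
  have hφz : ∀ (n : ℤ) (u : Hom E' E'), φ (n • u) = n • φ u := fun n u => Φ.map_zsmul n u
  have hφ0 : φ 0 = 0 := Φ.map_zero
  -- Step A : find a generator of K in the image of φ
  have hex : ∃ e₀ : Hom E' E', ∀ q : ℚ, φ e₀ ≠ q • 1 := by
    by_contra hc
    push_neg at hc
    obtain ⟨z, hz⟩ := him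
    have hzmem : z ∈ Submodule.span ℚ (Set.range φ) := hspan ▸ Submodule.mem_top
    have hsub : Submodule.span ℚ (Set.range φ) ≤ Submodule.span ℚ {(1 : ↥K)} := by
      apply Submodule.span_le.2
      rintro _ ⟨u, rfl⟩
      obtain ⟨q, hq⟩ := hc u
      rw [hq]
      exact Submodule.smul_mem _ _ (Submodule.mem_span_singleton_self 1)
    obtain ⟨q, hq⟩ := Submodule.mem_span_singleton.1 (hsub hzmem)
    apply hz
    have : (z : ℂ) = (q : ℂ) := by rw [← hq]; push_cast; rw [Rat.smul_one_eq_cast]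
    rw [this]
    simp
  obtain ⟨e₀, hα⟩ := hex
  set α : ↥K := φ e₀ with hαdef
  -- Step B : the basis (1, α) of K
  have hα0 : α ≠ 0 := by
    intro h; exact hα 0 (by simp [h])
  have hLI : LinearIndependent ℚ ![(1 : ↥K), α] := by
    refine linearIndependent_fin2.2 ⟨hα0, ?_⟩
    intro q hq
    simp only [Matrix.cons_val_one, Matrix.head_cons, Matrix.cons_val_zero] at hq
    have hq0 : q ≠ 0 := by rintro rfl; simp at hq
    apply hα q⁻¹
    rw [← hq, smul_smul, inv_mul_cancel₀ hq0, one_smul]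
  have hcard2 : Fintype.card (Fin 2) = Module.finrank ℚ ↥K := by simp [hquad]
  set bα : Module.Basis (Fin 2) ℚ ↥K := basisOfLinearIndependentOfCardEqFinrank hLI hcard2 with hbαdef
  have hbcoe : ⇑bα = ![(1 : ↥K), α] := coe_basisOfLinearIndependentOfCardEqFinrank hLI hcard2
  have hb0 : bα 0 = 1 := by rw [hbcoe]; rfl
  have hb1 : bα 1 = α := by rw [hbcoe]; rfl
  -- notation
  set δ : ℤ := T.deg e₀ with hδdef
  set τ : ℤ := T.B (T.one E') e₀ with hτdef
  -- clearing denominators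
  have hclear : ∀ (U : Hom E' E') (aU bU : ℚ), φ U = aU • (1 : ↥K) + bU • α →
      ∃ M ka kb : ℤ, 0 < M ∧ (ka : ℚ) = aU * M ∧ (kb : ℚ) = bU * M ∧
        M • U = ka • T.one E' + kb • e₀ := by
    intro U aU bU hU
    refine ⟨aU.den * bU.den, aU.num * bU.den, bU.num * aU.den, by positivity, ?_, ?_, ?_⟩
    · push_cast
      have h1 : (aU.den : ℚ) * aU = aU.num := Rat.den_mul_eq_num aU
      linear_combination (-(bU.den : ℚ)) * h1
    · push_cast
      have h1 : (bU.den : ℚ) * bU = bU.num := Rat.den_mul_eq_num bU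
      linear_combination (-(aU.den : ℚ)) * h1
    · apply hinj
      rw [hφz, hadd, hφz, hφz, hone, hU]
      rw [← Int.cast_smul_eq_zsmul ℚ ((aU.den : ℤ) * bU.den),
        ← Int.cast_smul_eq_zsmul ℚ (aU.num * bU.den),
        ← Int.cast_smul_eq_zsmul ℚ (bU.num * aU.den)]
      have h1 : (aU.den : ℚ) * aU = aU.num := Rat.den_mul_eq_num aU
      have h2 : (bU.den : ℚ) * bU = bU.num := Rat.den_mul_eq_num bU
      have e1 : ((aU.num * bU.den : ℤ) : ℚ) = aU * ((aU.den : ℤ) * (bU.den : ℤ) : ℤ) := by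
        push_cast; linear_combination (-(bU.den : ℚ)) * h1
      have e2 : ((bU.num * aU.den : ℤ) : ℚ) = bU * ((aU.den : ℤ) * (bU.den : ℤ) : ℤ) := by
        push_cast; linear_combination (-(aU.den : ℚ)) * h2
      rw [e1, e2]
      module
  -- coordinates of products : the bilinear form on End E'
  have hBco : ∀ (U V : Hom E' E') (aU bU aV bV : ℚ),
      φ U = aU • (1 : ↥K) + bU • α → φ V = aV • (1 : ↥K) + bV • α →
      (T.B U V : ℚ) = 2 * aU * aV + (aU * bV + bU * aV) * τ + 2 * bU * bV * δ := by
    intro U V aU bU aV bV hU hV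
    obtain ⟨M, ka, kb, hM, hka, hkb, hMU⟩ := hclear U aU bU hU
    obtain ⟨N, la, lb, hN, hla, hlb, hNV⟩ := hclear V aV bV hV
    have hBe1 : T.B e₀ (T.one E') = τ := by rw [T.B_comm]
    have hint : (M * N) * T.B U V
        = 2 * ka * la + (ka * lb + kb * la) * τ + 2 * kb * lb * δ := by
      have h1 : T.B (M • U) (N • V) = (M * N) * T.B U V := by
        rw [T.B_zsmul_left, T.B_zsmul_right]; ring
      rw [hMU, hNV] at h1
      simp only [T.B_add_left, T.B_add_right, T.B_zsmul_left, T.B_zsmul_right,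
        T.B_one_one, T.B_self, hBe1] at h1
      rw [← hτdef, ← hδdef] at h1
      linear_combination -h1
    have hMN : ((M : ℚ) * (N : ℚ)) ≠ 0 := by
      have : (0:ℚ) < (M:ℚ) * N := by positivity
      linarith
    apply mul_left_cancel₀ hMN
    have hcast := congrArg (fun z : ℤ => (z : ℚ)) hint
    push_cast at hcast
    rw [hka, hkb, hla, hlb] at hcast
    linear_combination hcast
  -- multiplicativity relations for E2 = e₀ ∘ e₀
  have hdegE2 : T.deg (T.comp e₀ e₀) = δ * δ := by rw [T.deg_comp]
  have hBeE2 : T.B e₀ (T.comp e₀ e₀) = τ * δ := by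
    have h := T.deg_comp e₀ (T.one E' + e₀)
    rw [T.comp_add, T.comp_one] at h
    have h2 := T.deg_add (T.one E') e₀
    rw [T.deg_one, ← hτdef] at h2
    have h3 := T.deg_add e₀ (T.comp e₀ e₀)
    rw [hdegE2] at h3
    rw [← hδdef] at h h3
    linear_combination h - h3 + δ * h2
  have hB1E2 : T.B (T.one E') (T.comp e₀ e₀) = τ ^ 2 - 2 * δ := by
    have h := T.deg_comp (T.one E' + e₀) (T.one E' + e₀)
    simp only [T.comp_add, T.add_comp, T.one_comp, T.comp_one] at h
    rw [T.deg_add (T.one E' + e₀) (e₀ + T.comp e₀ e₀),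
      T.deg_add e₀ (T.comp e₀ e₀)] at h
    simp only [T.B_add_left, T.B_add_right] at h
    have h2 := T.deg_add (T.one E') e₀
    rw [T.deg_one, ← hτdef, ← hδdef] at h2
    rw [h2, T.B_self, hBeE2, hdegE2, ← hτdef, ← hδdef] at h
    linear_combination h
  -- positivity : 4δ - τ² > 0
  have hpos : 0 < 4 * δ - τ ^ 2 := by
    have hwdeg : T.deg ((-τ) • T.one E' + (2 : ℤ) • e₀) = 4 * δ - τ ^ 2 := by
      rw [T.deg_comb, ← hτdef, ← hδdef]; ring
    have hwne : (-τ) • T.one E' + (2 : ℤ) • e₀ ≠ 0 := by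
      intro h0
      have hφw : ((-τ : ℤ) : ℚ) • (1 : ↥K) + ((2 : ℤ) : ℚ) • α = 0 := by
        rw [Int.cast_smul_eq_zsmul ℚ, Int.cast_smul_eq_zsmul ℚ, ← hone, ← hφz, ← hφz,
          ← hadd, h0, hφ0]
      have h2 : α - ((τ : ℚ) / 2) • (1 : ↥K)
          = ((1:ℚ)/2) • (((-τ : ℤ) : ℚ) • (1 : ↥K) + ((2 : ℤ) : ℚ) • α) := by
        push_cast
        module
      rw [hφw, smul_zero, sub_eq_zero] at h2
      exact hα ((τ : ℚ) / 2) h2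
    have := T.deg_pos _ hwne
    omega
  have hτ4δ : ((τ : ℚ) ^ 2 - 4 * (δ : ℚ)) ≠ 0 := by
    intro h
    have : ((4 * δ - τ ^ 2 : ℤ) : ℚ) = 0 := by push_cast; linarith
    have h2 : (4 * δ - τ ^ 2 : ℤ) = 0 := by exact_mod_cast this
    omega
  -- the minimal polynomial of α : α² = τ α - δ
  have hmin : α * α = (τ : ℚ) • α - (δ : ℚ) • (1 : ↥K) := by
    have hsum := bα.sum_repr (α * α)
    rw [Fin.sum_univ_two, hb0, hb1] at hsum
    set c0 : ℚ := bα.repr (α * α) 0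
    set c1 : ℚ := bα.repr (α * α) 1
    have hreprE2 : φ (T.comp e₀ e₀) = c0 • (1 : ↥K) + c1 • α := by
      rw [hmul e₀ e₀, ← hαdef]
      exact hsum.symm
    obtain ⟨M, k0, k1, hM, hk0, hk1, hME2⟩ := hclear (T.comp e₀ e₀) c0 c1 hreprE2
    -- relations
    have hBe1 : T.B e₀ (T.one E') = τ := by rw [T.B_comm]
    have hI : M * (τ ^ 2 - 2 * δ) = 2 * k0 + k1 * τ := by
      have h1 : T.B (T.one E') (M • T.comp e₀ e₀) = M * T.B (T.one E') (T.comp e₀ e₀) := T.B_zsmul_right M _ _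
      rw [hME2, T.B_add_right, T.B_zsmul_right, T.B_zsmul_right, T.B_one_one, ← hτdef,
        hB1E2] at h1
      linarith [h1]
    have hII : M * (τ * δ) = k0 * τ + 2 * k1 * δ := by
      have h1 : T.B e₀ (M • T.comp e₀ e₀) = M * T.B e₀ (T.comp e₀ e₀) := T.B_zsmul_right M _ _
      rw [hME2, T.B_add_right, T.B_zsmul_right, T.B_zsmul_right, hBe1, T.B_self, ← hδdef,
        hBeE2] at h1
      linarith [h1]
    have hIQ : (M : ℚ) * ((τ:ℚ) ^ 2 - 2 * δ) = 2 * k0 + (k1:ℚ) * τ := by exact_mod_cast hI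
    have hIIQ : (M : ℚ) * ((τ:ℚ) * δ) = (k0:ℚ) * τ + 2 * (k1:ℚ) * δ := by exact_mod_cast hII
    have hfac : ((k1 : ℚ) - (M:ℚ) * τ) * ((τ:ℚ) ^ 2 - 4 * δ) = 0 := by
      linear_combination 2 * hIIQ - (τ : ℚ) * hIQ
    have hk1' : (k1 : ℚ) = (M:ℚ) * τ := by
      rcases mul_eq_zero.1 hfac with h | h
      · linarith
      · exact absurd h hτ4δ
    have hk0' : (k0 : ℚ) = -((M:ℚ) * δ) := by
      linear_combination (-(1/2) : ℚ) * hIQ - ((τ:ℚ)/2) * hk1'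
    -- recover c0, c1
    have hMne : ((M : ℚ)) ≠ 0 := by positivity
    have hc1 : c1 = (τ : ℚ) := by
      have h1 := hk1.symm.trans hk1'
      have h2 : c1 * (M:ℚ) = (τ:ℚ) * (M:ℚ) := by linear_combination h1
      exact mul_right_cancel₀ hMne h2
    have hc0 : c0 = -(δ : ℚ) := by
      have h1 := hk0.symm.trans hk0'
      have h2 : c0 * (M:ℚ) = (-(δ:ℚ)) * M := by linear_combination h1
      exact mul_right_cancel₀ hMne h2
    rw [← hsum, hc0, hc1]
    module
  -- trace computations
  have Tr1 : Algebra.trace ℚ ↥K 1 = 2 := by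
    rw [show (1 : ↥K) = algebraMap ℚ ↥K 1 by simp, Algebra.trace_algebraMap, hquad]
    norm_num
  have hminb : α * α = (τ : ℚ) • bα 1 - (δ : ℚ) • bα 0 := by rw [hb0, hb1]; exact hmin
  have Trα : Algebra.trace ℚ ↥K α = (τ : ℚ) := by
    rw [Algebra.trace_eq_matrix_trace bα α, Matrix.trace_fin_two,
      Algebra.leftMulMatrix_eq_repr_mul, Algebra.leftMulMatrix_eq_repr_mul]
    have h00 : bα.repr (α * bα 0) 0 = 0 := by
      rw [hb0, mul_one, ← hb1, Module.Basis.repr_self]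
      simp
    have h11 : bα.repr (α * bα 1) 1 = (τ : ℚ) := by
      rw [hb1, hminb, map_sub, map_smul, map_smul, Module.Basis.repr_self, Module.Basis.repr_self]
      simp
    rw [h00, h11, zero_add]
  have TrαSq : Algebra.trace ℚ ↥K (α * α) = (τ:ℚ) ^ 2 - 2 * (δ:ℚ) := by
    rw [hmin, map_sub, map_smul, map_smul, Trα, Tr1]
    simp only [smul_eq_mul]
    push_cast
    ring
  -- the discriminant of the basis (1, α)
  have hdiscα : Algebra.discr ℚ ⇑bα = (τ:ℚ) ^ 2 - 4 * (δ:ℚ) := by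
    rw [Algebra.discr_def, Matrix.det_fin_two]
    simp only [Algebra.traceMatrix_apply, Algebra.traceForm_apply, hb0, hb1, one_mul, mul_one]
    rw [Tr1, Trα, TrαSq]
    ring
  -- relate to the discriminant of K
  have hcardι : Fintype.card
      (Module.Free.ChooseBasisIndex ℤ (NumberField.RingOfIntegers ↥K)) = 2 := by
    rw [← Module.finrank_eq_card_chooseBasisIndex, NumberField.RingOfIntegers.rank ↥K, hquad]
  set e : Fin 2 ≃ Module.Free.ChooseBasisIndex ℤ (NumberField.RingOfIntegers ↥K) :=
    (Fintype.equivFinOfCardEq hcardι).symm with hedef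
  set b2 := bα.reindex e with hb2def
  have hd2 : Algebra.discr ℚ ⇑b2 = Algebra.discr ℚ ⇑bα := by
    rw [hb2def, Module.Basis.coe_reindex]; exact Algebra.discr_reindex ℚ bα e
  set P := (NumberField.integralBasis ↥K).toMatrix ⇑b2 with hPdef
  have hPd : Algebra.discr ℚ ⇑b2
      = P.det ^ 2 * Algebra.discr ℚ ⇑(NumberField.integralBasis ↥K) := by
    have h := Algebra.discr_of_matrix_vecMul (A := ℚ) ⇑(NumberField.integralBasis ↥K) P
    rwa [hPdef, Module.Basis.toMatrix_map_vecMul] at h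
  have hPdet : P.det ≠ 0 := by
    have h := LinearEquiv.isUnit_det (LinearEquiv.refl ℚ ↥K) b2 (NumberField.integralBasis ↥K)
    rw [hPdef, ← LinearMap.toMatrix_id_eq_basis_toMatrix b2 (NumberField.integralBasis ↥K)]
    simpa using h.ne_zero
  have hfinal1 : (τ:ℚ) ^ 2 - 4 * (δ:ℚ) = P.det ^ 2 * (NumberField.discr ↥K : ℚ) := by
    rw [← hdiscα, ← hd2, hPd, coe_discr (K := ↥K)]
  -- the Hom(E', E) side
  obtain ⟨f₀, hf₀⟩ := hisog
  obtain ⟨g₀, hg₀l, hg₀r⟩ := T.exists_dual f₀ hf₀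
  set d : ℤ := T.deg f₀ with hddef
  have hd : 0 < d := T.deg_pos f₀ hf₀
  have hdegg₀ : T.deg g₀ = d := by
    have h := T.deg_comp g₀ f₀
    rw [hg₀l, T.deg_zsmul, T.deg_one] at h
    have h2 : T.deg g₀ * d = d * d := by rw [hddef]; linear_combination -h
    exact mul_right_cancel₀ (by omega) h2
  set x : Fin 2 → ↥K := fun i => φ (T.comp g₀ (bas i)) with hxdef
  set a : Fin 2 → ℚ := fun i => bα.repr (x i) 0 with hadef
  set b : Fin 2 → ℚ := fun i => bα.repr (x i) 1 with hbdef
  have hx : ∀ i, x i = a i • (1 : ↥K) + b i • α := by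
    intro i
    have hsum := bα.sum_repr (x i)
    rw [Fin.sum_univ_two, hb0, hb1] at hsum
    exact hsum.symm
  -- injectivity of g ↦ φ (g₀ ∘ g)
  have hinj0 : ∀ g : Hom E' E, φ (T.comp g₀ g) = 0 → g = 0 := by
    intro g hg
    by_contra hgne
    have h1 : T.comp g₀ g = 0 := hinj (hg.trans hφ0.symm)
    have h2 : T.deg (T.comp g₀ g) = 0 := by rw [h1, T.deg_zero]
    rw [T.deg_comp, hdegg₀] at h2
    have h3 := T.deg_pos g hgne
    nlinarith
  -- linear independence of x 0, x 1
  have hindepZ : ∀ k0 k1 : ℤ, k0 • x 0 + k1 • x 1 = 0 → k0 = 0 ∧ k1 = 0 := by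
    intro k0 k1 hsum
    have h1 : φ (T.comp g₀ (k0 • bas 0 + k1 • bas 1)) = 0 := by
      rw [T.comp_add, T.comp_zsmul, T.comp_zsmul, hadd, hφz, hφz]
      exact hsum
    have h2 : k0 • bas 0 + k1 • bas 1 = 0 := hinj0 _ h1
    have h3 := Fintype.linearIndependent_iff.1 bas.linearIndependent ![k0, k1] (by
      rw [Fin.sum_univ_two]
      simpa using h2)
    exact ⟨h3 0, h3 1⟩
  have hindepQ : ∀ r0 r1 : ℚ, r0 • x 0 + r1 • x 1 = 0 → r0 = 0 ∧ r1 = 0 := by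
    intro r0 r1 h
    have hk0 : ((r0.num * r1.den : ℤ) : ℚ) = r0 * ((r0.den : ℤ) * (r1.den : ℤ) : ℤ) := by
      push_cast
      linear_combination (-(r1.den : ℚ)) * Rat.den_mul_eq_num r0
    have hk1 : ((r1.num * r0.den : ℤ) : ℚ) = r1 * ((r0.den : ℤ) * (r1.den : ℤ) : ℤ) := by
      push_cast
      linear_combination (-(r0.den : ℚ)) * Rat.den_mul_eq_num r1
    have hz : (r0.num * r1.den) • x 0 + (r1.num * r0.den) • x 1 = 0 := by
      rw [← Int.cast_smul_eq_zsmul ℚ, ← Int.cast_smul_eq_zsmul ℚ, hk0, hk1,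
        mul_comm r0, mul_comm r1, mul_smul, mul_smul, ← smul_add, h, smul_zero]
    obtain ⟨h0, h1⟩ := hindepZ _ _ hz
    constructor
    · rcases mul_eq_zero.1 h0 with h' | h'
      · exact Rat.num_eq_zero.1 h'
      · exact absurd h' (by exact_mod_cast r1.den_nz)
    · rcases mul_eq_zero.1 h1 with h' | h'
      · exact Rat.num_eq_zero.1 h'
      · exact absurd h' (by exact_mod_cast r0.den_nz)
  have hΔ : a 0 * b 1 - a 1 * b 0 ≠ 0 := by
    intro hΔ0
    have hA : (-(a 1)) • x 0 + (a 0) • x 1 = (a 0 * b 1 - a 1 * b 0) • α := by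
      rw [hx 0, hx 1]; module
    rw [hΔ0, zero_smul] at hA
    obtain ⟨hA1, hA0⟩ := hindepQ _ _ hA
    have hB' : (-(b 1)) • x 0 + (b 0) • x 1 = (-(a 0 * b 1 - a 1 * b 0)) • (1 : ↥K) := by
      rw [hx 0, hx 1]; module
    rw [hΔ0, neg_zero, zero_smul] at hB'
    obtain ⟨hB1, hB0⟩ := hindepQ _ _ hB'
    have hx0 : x 0 = 0 := by
      rw [hx 0, hA0, hB0]; simp
    have : bas 0 = 0 := hinj0 _ hx0
    exact bas.ne_zero 0 this
  -- the Gram matrix entries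
  have hdG : ∀ i j : Fin 2, (d : ℚ) * ((T.deg (bas i + bas j) - T.deg (bas i) - T.deg (bas j)
      : ℤ) : ℚ) = 2 * a i * a j + (a i * b j + b i * a j) * τ + 2 * b i * b j * δ := by
    intro i j
    have hZ : d * (T.deg (bas i + bas j) - T.deg (bas i) - T.deg (bas j))
        = T.B (T.comp g₀ (bas i)) (T.comp g₀ (bas j)) := by
      unfold IsogenyTheory.B
      rw [← T.comp_add, T.deg_comp, T.deg_comp, T.deg_comp, hdegg₀]
      ring
    have hco := hBco (T.comp g₀ (bas i)) (T.comp g₀ (bas j)) (a i) (b i) (a j) (b j)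
      (hx i) (hx j)
    calc (d : ℚ) * ((T.deg (bas i + bas j) - T.deg (bas i) - T.deg (bas j) : ℤ) : ℚ)
        = ((d * (T.deg (bas i + bas j) - T.deg (bas i) - T.deg (bas j)) : ℤ) : ℚ) := by
          push_cast; ring
      _ = ((T.B (T.comp g₀ (bas i)) (T.comp g₀ (bas j)) : ℤ) : ℚ) := by rw [hZ]
      _ = _ := hco
  -- determinant computation
  set detG : ℤ := (Matrix.of fun i j =>
      T.deg (bas i + bas j) - T.deg (bas i) - T.deg (bas j)).det with hdetGdef
  have hdetG2 : detG = (T.deg (bas 0 + bas 0) - T.deg (bas 0) - T.deg (bas 0))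
      * (T.deg (bas 1 + bas 1) - T.deg (bas 1) - T.deg (bas 1))
      - (T.deg (bas 0 + bas 1) - T.deg (bas 0) - T.deg (bas 1))
      * (T.deg (bas 1 + bas 0) - T.deg (bas 1) - T.deg (bas 0)) := by
    rw [hdetGdef, Matrix.det_fin_two]
    simp [Matrix.of_apply]
  have hGQ : (d:ℚ) ^ 2 * (detG : ℚ)
      = (a 0 * b 1 - a 1 * b 0) ^ 2 * (4 * (δ:ℚ) - (τ:ℚ) ^ 2) := by
    have h00 := hdG 0 0
    have h01 := hdG 0 1
    have h10 := hdG 1 0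
    have h11 := hdG 1 1
    have hcast : (detG : ℚ) = ((T.deg (bas 0 + bas 0) - T.deg (bas 0) - T.deg (bas 0) : ℤ) : ℚ)
        * ((T.deg (bas 1 + bas 1) - T.deg (bas 1) - T.deg (bas 1) : ℤ) : ℚ)
        - ((T.deg (bas 0 + bas 1) - T.deg (bas 0) - T.deg (bas 1) : ℤ) : ℚ)
        * ((T.deg (bas 1 + bas 0) - T.deg (bas 1) - T.deg (bas 0) : ℤ) : ℚ) := by
      rw [hdetG2]; push_cast; ring
    have hd2 : (d:ℚ) ^ 2 * (detG:ℚ)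
        = ((d:ℚ) * ((T.deg (bas 0 + bas 0) - T.deg (bas 0) - T.deg (bas 0) : ℤ) : ℚ))
        * ((d:ℚ) * ((T.deg (bas 1 + bas 1) - T.deg (bas 1) - T.deg (bas 1) : ℤ) : ℚ))
        - ((d:ℚ) * ((T.deg (bas 0 + bas 1) - T.deg (bas 0) - T.deg (bas 1) : ℤ) : ℚ))
        * ((d:ℚ) * ((T.deg (bas 1 + bas 0) - T.deg (bas 1) - T.deg (bas 0) : ℤ) : ℚ)) := by
      rw [hcast]; ring
    rw [hd2, h00, h01, h10, h11]
    ring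
  -- final assembly
  set s : ℚ := (a 0 * b 1 - a 1 * b 0) * P.det with hsdef
  have hs : s ≠ 0 := mul_ne_zero hΔ hPdet
  have hmain : (d:ℚ) ^ 2 * (detG : ℚ) = -(s ^ 2) * (NumberField.discr ↥K : ℚ) := by
    rw [hGQ, hsdef]
    linear_combination (-((a 0 * b 1 - a 1 * b 0) ^ 2)) * hfinal1
  have hsM : ((s.den : ℚ)) * s = s.num := Rat.den_mul_eq_num s
  refine ⟨d * (s.den : ℤ), s.num, ?_, Rat.num_ne_zero.2 hs, ?_⟩
  · have : (s.den : ℤ) ≠ 0 := by exact_mod_cast s.den_nz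
    exact mul_ne_zero (by omega) this
  · have hQ : ((d * (s.den : ℤ) : ℤ) : ℚ) ^ 2 * (detG : ℚ)
        = -(((s.num : ℤ) : ℚ) ^ 2) * (NumberField.discr ↥K : ℚ) := by
      push_cast
      linear_combination ((s.den : ℚ)) ^ 2 * hmain
        - (NumberField.discr ↥K : ℚ) * (((s.den : ℚ)) * s + (s.num : ℚ)) * hsM
    exact_mod_cast hQ
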